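/- Extended Variational Principle for the Curie–Weiss model: for every β > 0 and J > 0, the limit as N → ∞ of the supremum, taken for each N separately over all Magnetization Structures (Σ, ξ, m̃) with Σ finite, ξ strictly positive, and m̃ : Σ → [-1,1], of the trial function G_N(Σ, ξ, m̃) = (1/N) ln [ (∑_{σ∈{-1,1}^N} ∑_{τ∈Σ} ξ_τ exp(βJN m(σ) m̃(τ))) / (∑_{τ∈Σ} ξ_τ exp((βJN/2) m̃(τ)²)) ] exists and equals the limiting pressure: lim_{N→∞} sup_{(Σ,ξ,m̃)} G_N(Σ, ξ, m̃) = lim_{N→∞} (1/N) ln Z_N(β). -/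

import Mathlib

open Real Filter

/-- The value of a spin: `true ↦ 1`, `false ↦ -1`. -/
noncomputable def spin (b : Bool) : ℝ := if b then 1 else -1

/-- The magnetization per spin of a configuration `σ ∈ {-1,1}^N`. -/
noncomputable def mag (N : ℕ) (σ : Fin N → Bool) : ℝ := (1 / (N : ℝ)) * ∑ i, spin (σ i)

/-- The Curie–Weiss partition function `Z_N(β) = ∑_σ exp((βJN/2) m(σ)²)`. -/
noncomputable def Zcw (N : ℕ) (J β : ℝ) : ℝ :=
  ∑ σ : Fin N → Bool, Real.exp (β * J * (N : ℝ) / 2 * (mag N σ) ^ 2)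

/-- A Magnetization Structure: a finite nonempty set `Σ`, strictly positive weights
`ξ : Σ → ℝ`, and a trial magnetization `m̃ : Σ → [-1,1]`. -/
structure MaSt where
  carrier : Type
  [fin : Fintype carrier]
  [nonemp : Nonempty carrier]
  xi : carrier → ℝ
  xi_pos : ∀ τ, 0 < xi τ
  mt : carrier → ℝ
  mt_mem : ∀ τ, mt τ ∈ Set.Icc (-1 : ℝ) 1

attribute [instance] MaSt.fin MaSt.nonemp

/-- The Curie–Weiss trial function `G_N(Σ, ξ, m̃)` associated to a Magnetization
Structure. -/
noncomputable def Gcw (N : ℕ) (J β : ℝ) (M : MaSt) : ℝ :=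
  (1 / (N : ℝ)) * Real.log
    ((∑ σ : Fin N → Bool, ∑ τ : M.carrier,
        M.xi τ * Real.exp (β * J * (N : ℝ) * mag N σ * M.mt τ)) /
      (∑ τ : M.carrier, M.xi τ * Real.exp (β * J * (N : ℝ) / 2 * (M.mt τ) ^ 2)))

lemma abs_spin (b : Bool) : |spin b| = 1 := by
  cases b <;> simp [spin]

lemma abs_mag_le (N : ℕ) (σ : Fin N → Bool) : |mag N σ| ≤ 1 := by
  rcases Nat.eq_zero_or_pos N with h | h
  · subst h; simp [mag]
  · have hN : (0:ℝ) < N := by exact_mod_cast h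
    have h1 : |∑ i, spin (σ i)| ≤ (N : ℝ) := by
      calc |∑ i, spin (σ i)| ≤ ∑ i, |spin (σ i)| := Finset.abs_sum_le_sum_abs _ _
        _ = (N : ℝ) := by simp [abs_spin]
    rw [mag, abs_mul, abs_of_nonneg (by positivity : (0:ℝ) ≤ 1 / N)]
    rw [div_mul_eq_mul_div, one_mul, div_le_one hN]
    exact h1

lemma Zcw_pos (N : ℕ) (J β : ℝ) : 0 < Zcw N J β :=
  Finset.sum_pos (fun _ _ => Real.exp_pos _) Finset.univ_nonempty

lemma Zcw_ge (N : ℕ) {J β : ℝ} (hβ : 0 ≤ β) (hJ : 0 ≤ J) : (2:ℝ)^N ≤ Zcw N J β := by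
  have : ∀ σ : Fin N → Bool, (1:ℝ) ≤ Real.exp (β * J * (N : ℝ) / 2 * (mag N σ) ^ 2) := by
    intro σ
    rw [show (1:ℝ) = Real.exp 0 by simp]
    exact Real.exp_le_exp.2 (by positivity)
  calc (2:ℝ)^N = ∑ _σ : Fin N → Bool, (1:ℝ) := by
        simp [Finset.card_univ]
    _ ≤ Zcw N J β := Finset.sum_le_sum fun σ _ => this σ

lemma Zcw_eq {N : ℕ} (hN : 0 < N) (J β : ℝ) :
    Zcw N J β = ∑ σ : Fin N → Bool, Real.exp (β * J / (2 * N) * (∑ i, spin (σ i)) ^ 2) := by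
  apply Finset.sum_congr rfl
  intro σ _
  congr 1
  have hN' : (N:ℝ) ≠ 0 := by positivity
  rw [mag]
  field_simp

lemma sq_div_add {a b x y : ℝ} (hx : 0 < x) (hy : 0 < y) :
    (a + b)^2 / (x + y) ≤ a^2 / x + b^2 / y := by
  rw [div_add_div _ _ (ne_of_gt hx) (ne_of_gt hy), div_le_div_iff₀ (by positivity) (by positivity)]
  nlinarith [sq_nonneg (a * y - b * x), sq_nonneg (a*y), mul_pos hx hy]

lemma Zcw_submul {J β : ℝ} (hβ : 0 ≤ β) (hJ : 0 ≤ J) {m n : ℕ} (hm : 0 < m) (hn : 0 < n) :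
    Zcw (m + n) J β ≤ Zcw m J β * Zcw n J β := by
  have hmn : 0 < m + n := by omega
  rw [Zcw_eq hmn, Zcw_eq hm, Zcw_eq hn]
  set e : (Fin (m + n) → Bool) ≃ ((Fin m → Bool) × (Fin n → Bool)) :=
    (Equiv.arrowCongr finSumFinEquiv (Equiv.refl Bool)).symm.trans
      (Equiv.sumArrowEquivProdArrow _ _ _) with he
  rw [← Equiv.sum_comp e.symm
    (fun σ : Fin (m+n) → Bool => Real.exp (β * J / (2 * ↑(m+n)) * (∑ i, spin (σ i)) ^ 2))]
  rw [Fintype.sum_mul_sum, Fintype.sum_prod_type]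
  apply Finset.sum_le_sum; intro p _
  apply Finset.sum_le_sum; intro q _
  rw [← Real.exp_add, Real.exp_le_exp]
  have hsum : ∑ i, spin (e.symm (p, q) i) =
      (∑ i, spin (p i)) + (∑ j, spin (q j)) := by
    rw [Fin.sum_univ_add]
    congr 1
    · apply Finset.sum_congr rfl; intro i _
      congr 1
      simp [he, Equiv.sumArrowEquivProdArrow, Equiv.arrowCongr]
    · apply Finset.sum_congr rfl; intro j _
      congr 1
      simp [he, Equiv.sumArrowEquivProdArrow, Equiv.arrowCongr]
  rw [hsum]
  have key := sq_div_add (a := ∑ i, spin (p i)) (b := ∑ j, spin (q j))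
    (x := (m:ℝ)) (y := (n:ℝ)) (by exact_mod_cast hm) (by exact_mod_cast hn)
  have hβJ : 0 ≤ β * J := mul_nonneg hβ hJ
  have : β * J / (2 * ↑(m + n)) * (∑ i, spin (p i) + ∑ j, spin (q j)) ^ 2
      = β * J / 2 * ((∑ i, spin (p i) + ∑ j, spin (q j)) ^ 2 / (↑m + ↑n)) := by
    have hm' : (m:ℝ) ≠ 0 := by positivity
    have hn' : (n:ℝ) ≠ 0 := by positivity
    have hc : (m:ℝ) + (n:ℝ) ≠ 0 := by positivity
    push_cast
    field_simp
  rw [this]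
  have h2 : β * J / (2 * ↑m) * (∑ i, spin (p i)) ^ 2 + β * J / (2 * ↑n) * (∑ j, spin (q j)) ^ 2
      = β * J / 2 * ((∑ i, spin (p i))^2 / ↑m + (∑ j, spin (q j))^2 / ↑n) := by
    field_simp
  rw [h2]
  exact mul_le_mul_of_nonneg_left key (by positivity)

lemma Zcw_zero (J β : ℝ) : Zcw 0 J β = 1 := by
  simp [Zcw]

lemma pressure_tendsto {J β : ℝ} (hβ : 0 ≤ β) (hJ : 0 ≤ J) :
    ∃ p, Tendsto (fun N : ℕ => (1 / (N : ℝ)) * Real.log (Zcw N J β)) atTop (nhds p) := by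
  set u : ℕ → ℝ := fun N => Real.log (Zcw N J β) with hu
  have hu0 : u 0 = 0 := by simp [hu, Zcw_zero]
  have hsub : Subadditive u := by
    intro m n
    rcases Nat.eq_zero_or_pos m with hm | hm
    · subst hm; simp [hu0]
    rcases Nat.eq_zero_or_pos n with hn | hn
    · subst hn; simp [hu0]
    have h := Zcw_submul hβ hJ hm hn
    calc u (m + n) ≤ Real.log (Zcw m J β * Zcw n J β) :=
          Real.log_le_log (Zcw_pos _ _ _) h
      _ = u m + u n := Real.log_mul (ne_of_gt (Zcw_pos _ _ _)) (ne_of_gt (Zcw_pos _ _ _))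
  have hnn : ∀ n : ℕ, 0 ≤ u n := by
    intro n
    have h2 : (1:ℝ) ≤ Zcw n J β := le_trans (one_le_pow₀ (by norm_num)) (Zcw_ge n hβ hJ)
    simpa [hu] using Real.log_nonneg h2
  have hbdd : BddBelow (Set.range fun n : ℕ => u n / n) := by
    refine ⟨0, ?_⟩
    rintro x ⟨n, rfl⟩
    exact div_nonneg (hnn n) (Nat.cast_nonneg n)
  refine ⟨hsub.lim, ?_⟩
  have := hsub.tendsto_lim hbdd
  apply this.congr
  intro n
  rw [one_div, inv_mul_eq_div]

lemma Gcw_le {J β : ℝ} (hβ : 0 ≤ β) (hJ : 0 ≤ J) (N : ℕ) (M : MaSt) :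
    Gcw N J β M ≤ (1 / (N : ℝ)) * Real.log (Zcw N J β) := by
  set D := ∑ τ : M.carrier, M.xi τ * Real.exp (β * J * (N : ℝ) / 2 * (M.mt τ) ^ 2) with hDdef
  set Num := ∑ σ : Fin N → Bool, ∑ τ : M.carrier,
      M.xi τ * Real.exp (β * J * (N : ℝ) * mag N σ * M.mt τ) with hNumdef
  have hD : 0 < D :=
    Finset.sum_pos (fun τ _ => mul_pos (M.xi_pos τ) (Real.exp_pos _)) Finset.univ_nonempty
  have hNum : 0 < Num :=
    Finset.sum_pos (fun σ _ =>
      Finset.sum_pos (fun τ _ => mul_pos (M.xi_pos τ) (Real.exp_pos _)) Finset.univ_nonempty)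
      Finset.univ_nonempty
  have key : Num ≤ Zcw N J β * D := by
    have h1 : Num ≤ ∑ σ : Fin N → Bool, ∑ τ : M.carrier,
        Real.exp (β * J * (N : ℝ) / 2 * (mag N σ) ^ 2) *
          (M.xi τ * Real.exp (β * J * (N : ℝ) / 2 * (M.mt τ) ^ 2)) := by
      apply Finset.sum_le_sum; intro σ _
      apply Finset.sum_le_sum; intro τ _
      have hx : 0 < M.xi τ := M.xi_pos τ
      rw [show Real.exp (β * J * (N : ℝ) / 2 * (mag N σ) ^ 2) *
            (M.xi τ * Real.exp (β * J * (N : ℝ) / 2 * (M.mt τ) ^ 2))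
          = M.xi τ * (Real.exp (β * J * (N : ℝ) / 2 * (mag N σ) ^ 2) *
            Real.exp (β * J * (N : ℝ) / 2 * (M.mt τ) ^ 2)) from by ring, ← Real.exp_add]
      apply mul_le_mul_of_nonneg_left _ (le_of_lt hx)
      rw [Real.exp_le_exp]
      have hc : 0 ≤ β * J * (N : ℝ) := by positivity
      nlinarith [sq_nonneg (mag N σ - M.mt τ)]
    calc Num ≤ _ := h1
      _ = Zcw N J β * D := by rw [hDdef, Zcw, Fintype.sum_mul_sum]
  unfold Gcw
  rw [← hNumdef, ← hDdef]
  apply mul_le_mul_of_nonneg_left _ (by positivity)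
  apply Real.log_le_log (div_pos hNum hD)
  rw [div_le_iff₀ hD]
  exact key

noncomputable def lowMaSt (J β : ℝ) (N : ℕ) (hN : 0 < N) : MaSt where
  carrier := Fin (N + 1)
  xi k := Real.exp (-(β * J * (N : ℝ) / 2) * ((2 * (k : ℝ) - N) / N) ^ 2)
  xi_pos k := Real.exp_pos _
  mt k := (2 * (k : ℝ) - N) / N
  mt_mem k := by
    have hN' : (0:ℝ) < N := by exact_mod_cast hN
    have hk : (k : ℝ) ≤ N := by exact_mod_cast Fin.is_le k
    have hk0 : (0:ℝ) ≤ (k : ℝ) := Nat.cast_nonneg _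
    constructor
    · rw [le_div_iff₀ hN']; linarith
    · rw [div_le_iff₀ hN']; linarith

lemma mag_realized {N : ℕ} (hN : 0 < N) (σ : Fin N → Bool) :
    ∃ k : Fin (N + 1), (2 * (k : ℝ) - N) / N = mag N σ := by
  set t := (Finset.univ.filter fun i => σ i).card with ht
  have htle : t ≤ N := le_trans (Finset.card_filter_le _ _) (by simp)
  refine ⟨⟨t, Nat.lt_succ_of_le htle⟩, ?_⟩
  have h1 : ∀ b : Bool, spin b = 2 * (if b then (1:ℝ) else 0) - 1 := by
    intro b; cases b <;> norm_num [spin]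
  have hs : ∑ i, spin (σ i) = 2 * (t : ℝ) - N := by
    calc ∑ i, spin (σ i) = ∑ i, (2 * (if σ i then (1:ℝ) else 0) - 1) := by
          exact Finset.sum_congr rfl fun i _ => h1 (σ i)
      _ = 2 * (∑ i, if σ i then (1:ℝ) else 0) - N := by
          rw [Finset.sum_sub_distrib, ← Finset.mul_sum]; simp
      _ = 2 * (t : ℝ) - N := by rw [Finset.sum_boole, ht]
  have hN' : (N:ℝ) ≠ 0 := by positivity
  rw [mag, hs]
  push_cast
  field_simp

lemma Gcw_lowMaSt (J β : ℝ) (N : ℕ) (hN : 0 < N) :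
    Gcw N J β (lowMaSt J β N hN) =
      (1 / (N : ℝ)) * Real.log
        ((∑ σ : Fin N → Bool, ∑ k : Fin (N + 1),
            Real.exp (-(β * J * (N : ℝ) / 2) * ((2 * (k : ℝ) - N) / N) ^ 2) *
              Real.exp (β * J * (N : ℝ) * mag N σ * ((2 * (k : ℝ) - N) / N))) /
          (∑ k : Fin (N + 1),
            Real.exp (-(β * J * (N : ℝ) / 2) * ((2 * (k : ℝ) - N) / N) ^ 2) *
              Real.exp (β * J * (N : ℝ) / 2 * ((2 * (k : ℝ) - N) / N) ^ 2))) := rfl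

lemma Gcw_low {J β : ℝ} (hβ : 0 ≤ β) (hJ : 0 ≤ J) {N : ℕ} (hN : 0 < N) :
    (1 / (N : ℝ)) * Real.log (Zcw N J β) - Real.log ((N : ℝ) + 1) / N
      ≤ Gcw N J β (lowMaSt J β N hN) := by
  rw [Gcw_lowMaSt J β N hN]
  have hD : (∑ k : Fin (N + 1),
      Real.exp (-(β * J * (N : ℝ) / 2) * ((2 * (k : ℝ) - N) / N) ^ 2) *
        Real.exp (β * J * (N : ℝ) / 2 * ((2 * (k : ℝ) - N) / N) ^ 2)) = (N : ℝ) + 1 := by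
    have h1 : ∀ k : Fin (N + 1),
        Real.exp (-(β * J * (N : ℝ) / 2) * ((2 * (k : ℝ) - N) / N) ^ 2) *
          Real.exp (β * J * (N : ℝ) / 2 * ((2 * (k : ℝ) - N) / N) ^ 2) = 1 := by
      intro k
      rw [← Real.exp_add, show -(β * J * (N : ℝ) / 2) * ((2 * (k : ℝ) - N) / N) ^ 2 +
        β * J * (N : ℝ) / 2 * ((2 * (k : ℝ) - N) / N) ^ 2 = 0 from by ring, Real.exp_zero]
    rw [Finset.sum_congr rfl fun k _ => h1 k, Finset.sum_const, Finset.card_univ,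
      Fintype.card_fin, nsmul_eq_mul, mul_one]
    push_cast; ring
  have hNum : Zcw N J β ≤ ∑ σ : Fin N → Bool, ∑ k : Fin (N + 1),
      Real.exp (-(β * J * (N : ℝ) / 2) * ((2 * (k : ℝ) - N) / N) ^ 2) *
        Real.exp (β * J * (N : ℝ) * mag N σ * ((2 * (k : ℝ) - N) / N)) := by
    unfold Zcw
    apply Finset.sum_le_sum
    intro σ _
    obtain ⟨k, hk⟩ := mag_realized hN σ
    have hterm : Real.exp (β * J * (N : ℝ) / 2 * (mag N σ) ^ 2)
        = Real.exp (-(β * J * (N : ℝ) / 2) * ((2 * (k : ℝ) - N) / N) ^ 2) *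
          Real.exp (β * J * (N : ℝ) * mag N σ * ((2 * (k : ℝ) - N) / N)) := by
      rw [← Real.exp_add]
      congr 1
      rw [hk]; ring
    rw [hterm]
    exact Finset.single_le_sum (f := fun j : Fin (N + 1) =>
        Real.exp (-(β * J * (N : ℝ) / 2) * ((2 * (j : ℝ) - N) / N) ^ 2) *
          Real.exp (β * J * (N : ℝ) * mag N σ * ((2 * (j : ℝ) - N) / N)))
      (fun j _ => le_of_lt (mul_pos (Real.exp_pos _) (Real.exp_pos _))) (Finset.mem_univ k)
  rw [hD]
  have hN1 : (0:ℝ) < (N : ℝ) + 1 := by positivity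
  have h1 : (0:ℝ) < Zcw N J β / ((N : ℝ) + 1) := div_pos (Zcw_pos _ _ _) hN1
  have h2 : Zcw N J β / ((N : ℝ) + 1)
      ≤ (∑ σ : Fin N → Bool, ∑ k : Fin (N + 1),
          Real.exp (-(β * J * (N : ℝ) / 2) * ((2 * (k : ℝ) - N) / N) ^ 2) *
            Real.exp (β * J * (N : ℝ) * mag N σ * ((2 * (k : ℝ) - N) / N))) / ((N : ℝ) + 1) := by
    gcongr
  calc (1 / (N : ℝ)) * Real.log (Zcw N J β) - Real.log ((N : ℝ) + 1) / N
      = (1 / (N : ℝ)) * Real.log (Zcw N J β / ((N : ℝ) + 1)) := by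
        rw [Real.log_div (ne_of_gt (Zcw_pos _ _ _)) (ne_of_gt hN1)]; ring
    _ ≤ _ := mul_le_mul_of_nonneg_left (Real.log_le_log h1 h2) (by positivity)

/-- Extended Variational Principle for the Curie–Weiss model: for every `β > 0`, `J > 0`,
the limit of the supremum over all Magnetization Structures of the trial function `G_N`
exists and equals the limiting pressure `lim_N (1/N) ln Z_N(β)`. -/
theorem cw_extended_variational_principle (β J : ℝ) (hβ : 0 < β) (hJ : 0 < J) :
    ∃ p : ℝ,
      Tendsto (fun N : ℕ => (1 / (N : ℝ)) * Real.log (Zcw N J β)) atTop (nhds p) ∧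
      Tendsto (fun N : ℕ => sSup {g : ℝ | ∃ M : MaSt, g = Gcw N J β M}) atTop (nhds p) := by
  have hβ' := le_of_lt hβ
  have hJ' := le_of_lt hJ
  obtain ⟨p, hp⟩ := pressure_tendsto hβ' hJ'
  refine ⟨p, hp, ?_⟩
  -- tail : log(N+1)/N → 0
  have htail : Tendsto (fun N : ℕ => Real.log ((N : ℝ) + 1) / N) atTop (nhds 0) := by
    have h0 : Tendsto (fun x : ℝ => Real.log x / x) atTop (nhds 0) :=
      Real.isLittleO_log_id_atTop.tendsto_div_nhds_zero
    have h1 : Tendsto (fun N : ℕ => ((N : ℝ) + 1)) atTop atTop :=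
      tendsto_atTop_add_const_right atTop 1 tendsto_natCast_atTop_atTop
    have h2 := h0.comp h1
    have h3 : Tendsto (fun N : ℕ => (1 : ℝ) + 1 / N) atTop (nhds 1) := by
      have := tendsto_const_nhds (x := (1:ℝ)) (f := atTop (α := ℕ))
      simpa using this.add tendsto_one_div_atTop_nhds_zero_nat
    have h4 := h2.mul h3
    rw [zero_mul] at h4
    apply h4.congr'
    filter_upwards [eventually_ge_atTop 1] with N hN1
    have hN' : (N:ℝ) ≠ 0 := by
      have : (0:ℝ) < N := by exact_mod_cast hN1
      positivity
    have hN1' : (N:ℝ) + 1 ≠ 0 := by positivity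
    show Real.log ((N : ℝ) + 1) / ((N : ℝ) + 1) * (1 + 1 / N) = Real.log ((N : ℝ) + 1) / N
    field_simp
  have hlow : Tendsto (fun N : ℕ => (1 / (N : ℝ)) * Real.log (Zcw N J β)
      - Real.log ((N : ℝ) + 1) / N) atTop (nhds p) := by
    simpa using hp.sub htail
  refine tendsto_of_tendsto_of_tendsto_of_le_of_le' hlow hp ?_ ?_
  · filter_upwards [eventually_ge_atTop 1] with N hN1
    have hN : 0 < N := hN1
    have hbdd : BddAbove {g : ℝ | ∃ M : MaSt, g = Gcw N J β M} := by
      refine ⟨(1 / (N : ℝ)) * Real.log (Zcw N J β), ?_⟩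
      rintro x ⟨M, rfl⟩
      exact Gcw_le hβ' hJ' N M
    calc (1 / (N : ℝ)) * Real.log (Zcw N J β) - Real.log ((N : ℝ) + 1) / N
        ≤ Gcw N J β (lowMaSt J β N hN) := Gcw_low hβ' hJ' hN
      _ ≤ _ := le_csSup hbdd ⟨lowMaSt J β N hN, rfl⟩
  · filter_upwards [eventually_ge_atTop 1] with N hN1
    refine csSup_le ⟨Gcw N J β (lowMaSt J β N hN1), lowMaSt J β N hN1, rfl⟩ ?_
    rintro x ⟨M, rfl⟩
    exact Gcw_le hβ' hJ' N M
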